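/- Let (X, ‖·‖) be a normed space and fix b ∈ [0, ∞); set λ = 1/(b+1). For r ∈ [0, 1) put θ = r(b+1), and for s > 0 let Γ(b, r, s) be the family of all mappings T : X → X such that for all x, y ∈ X: s‖x − Tx‖ ≤ ‖x − y‖ implies ‖b(x − y) + Tx − Ty‖ ≤ θ‖x − y‖. Then the following are equivalent: (i) X is a Banach space (i.e., X is complete); (ii) for every r ∈ [0, 1), every mapping T ∈ Γ(b, r, ψ(r)) has a fixed point; (iii) there exist r ∈ (0, 1) and s ∈ (0, ψ(r)] such that every mapping T ∈ Γ(b, r, s) has a fixed point. -/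

import Mathlib

open Filter Topology

/-- The function ψ from the paper: ψ(r) = λ on [0, (√5−1)/2],
    λ(1−r)/r² on ((√5−1)/2, 1/√2), and λ/(1+r) on [1/√2, 1). -/
noncomputable def suzukiPsi (lam r : ℝ) : ℝ :=
  if r ≤ (Real.sqrt 5 - 1) / 2 then lam
  else if r < 1 / Real.sqrt 2 then lam * (1 - r) / r ^ 2
  else lam / (1 + r)

/-- The family Γ(b, r, s) of mappings `T` on `X` such that
    `s‖x − Tx‖ ≤ ‖x − y‖` implies `‖b(x − y) + Tx − Ty‖ ≤ θ‖x − y‖`, where `θ = r(b+1)`. -/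
def GammaFamily (X : Type*) [NormedAddCommGroup X] [NormedSpace ℝ X]
    (b r s : ℝ) : Set (X → X) :=
  {T | ∀ x y : X, s * ‖x - T x‖ ≤ ‖x - y‖ →
    ‖b • (x - y) + T x - T y‖ ≤ (r * (b + 1)) * ‖x - y‖}

section FP
variable {X : Type*} [MetricSpace X]

lemma suzuki_orbit {F : X → X} {r θ : ℝ} (hr0 : 0 ≤ r) (hθ1 : θ ≤ 1)
    (hF : ∀ x y, θ * dist x (F x) ≤ dist x y → dist (F x) (F y) ≤ r * dist x y)
    (x : X) : ∀ n, dist (F^[n] x) (F^[n+1] x) ≤ r ^ n * dist x (F x) := by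
  intro n
  induction n with
  | zero => simp
  | succ n ih =>
    have key := hF (F^[n] x) (F^[n+1] x) (by
      rw [Function.iterate_succ_apply' F n]
      nlinarith [dist_nonneg (x := F^[n] x) (y := F (F^[n] x))])
    rw [← Function.iterate_succ_apply' F n, ← Function.iterate_succ_apply' F (n+1)] at key
    calc dist (F^[n+1] x) (F^[n+1+1] x) ≤ r * dist (F^[n] x) (F^[n+1] x) := key
      _ ≤ r * (r ^ n * dist x (F x)) := mul_le_mul_of_nonneg_left ih hr0
      _ = r ^ (n+1) * dist x (F x) := by ring

/-- Suzuki's fixed point theorem (with the sharp constant, all three regimes). -/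
lemma suzuki_fp [CompleteSpace X] [Nonempty X] {F : X → X} {r θ : ℝ}
    (hr0 : 0 ≤ r) (hr1 : r < 1) (hθ0 : 0 ≤ θ) (hθ1 : θ ≤ 1)
    (hcase : (θ * r ≤ 1 ∧ θ * r ^ 2 ≤ 1 - r) ∨ θ * (1 + r) ≤ 1)
    (hF : ∀ x y, θ * dist x (F x) ≤ dist x y → dist (F x) (F y) ≤ r * dist x y) :
    ∃ z, F z = z := by
  obtain ⟨x₀⟩ := ‹Nonempty X›
  set x : ℕ → X := fun n => F^[n] x₀ with hxdef
  have hxsucc : ∀ n, x (n+1) = F (x n) := fun n => Function.iterate_succ_apply' F n x₀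
  have hxsucc2 : ∀ n, x (n+2) = F (x (n+1)) := fun n => hxsucc (n+1)
  have horb := suzuki_orbit hr0 hθ1 hF x₀
  have hcauchy : CauchySeq x := by
    apply cauchySeq_of_le_geometric r (dist x₀ (F x₀)) hr1
    intro n
    rw [mul_comm]; exact horb n
  obtain ⟨z, hz⟩ := cauchySeq_tendsto_of_complete hcauchy
  -- Claim A : points other than z are mapped closer to z
  have claimA : ∀ w : X, w ≠ z → dist z (F w) ≤ r * dist z w := by
    intro w hw
    have hd : 0 < dist w z := dist_pos.2 hw
    obtain ⟨N, hN⟩ := Metric.tendsto_atTop.mp hz (dist w z / 3) (by positivity)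
    have key : ∀ n ≥ N, dist (x (n+1)) (F w) ≤ r * dist (x n) w := by
      intro n hn
      rw [hxsucc]
      apply hF
      have t1 : dist (x n) z < dist w z / 3 := hN n hn
      have t2 : dist (x (n+1)) z < dist w z / 3 := hN (n+1) (by omega)
      have t3 : dist (x n) (F (x n)) ≤ dist (x n) z + dist (x (n+1)) z := by
        rw [← hxsucc]
        calc dist (x n) (x (n+1)) ≤ dist (x n) z + dist z (x (n+1)) := dist_triangle _ _ _
          _ = dist (x n) z + dist (x (n+1)) z := by rw [dist_comm z]
      have t4 : dist w z ≤ dist (x n) w + dist (x n) z := by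
        calc dist w z ≤ dist w (x n) + dist (x n) z := dist_triangle _ _ _
          _ = dist (x n) w + dist (x n) z := by rw [dist_comm w]
      nlinarith [dist_nonneg (x := x n) (y := F (x n))]
    have l1 : Tendsto (fun n => dist (x (n+1)) (F w)) atTop (𝓝 (dist z (F w))) :=
      (hz.comp (tendsto_add_atTop_nat 1)).dist tendsto_const_nhds
    have l2 : Tendsto (fun n => r * dist (x n) w) atTop (𝓝 (r * dist z w)) :=
      tendsto_const_nhds.mul (hz.dist tendsto_const_nhds)
    exact le_of_tendsto_of_tendsto l1 l2 (eventually_atTop.2 ⟨N, key⟩)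
  rcases hcase with ⟨hθr, hθr2⟩ | hbig
  · -- small r branch
    refine ⟨z, ?_⟩
    by_contra hfz
    set a : ℝ := dist z (F z) with ha
    have ha0 : 0 < a := dist_pos.2 (fun h => hfz h.symm)
    set y : ℕ → X := fun n => F^[n] z with hydef
    have hysucc : ∀ n, y (n+1) = F (y n) := fun n => Function.iterate_succ_apply' F n z
    have hysucc2 : ∀ n, y (n+2) = F (y (n+1)) := fun n => hysucc (n+1)
    have hy1 : y 1 = F z := by
      show F^[1] z = F z
      simp
    have eb : ∀ n, dist (y n) (y (n+1)) ≤ r ^ n * a := suzuki_orbit hr0 hθ1 hF z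
    have Q : ∀ n, θ * (r ^ (n+1) * a) ≤ dist (y (n+1)) z ∧
        (1 - r) * a ≤ dist (y (n+1)) z ∧ dist (y (n+1)) z ≤ r ^ n * a := by
      intro n
      induction n with
      | zero =>
        have heq : dist (y (0+1)) z = a := by
          show dist (y 1) z = a
          rw [hy1, dist_comm]
        simp only [zero_add, pow_one, pow_zero] at heq ⊢
        refine ⟨?_, ?_, ?_⟩
        · rw [heq]; nlinarith [mul_nonneg (show (0:ℝ) ≤ 1 - θ*r by linarith) ha0.le]
        · rw [heq]; nlinarith
        · rw [heq]; nlinarith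
      | succ n ih =>
        obtain ⟨hQ1, hlo, hhi⟩ := ih
        have hne' : y (n+1) ≠ z := by
          rw [← dist_pos]
          nlinarith
        have hupper : dist (y (n+1+1)) z ≤ r ^ (n+1) * a := by
          have hA := claimA (y (n+1)) hne'
          rw [← hysucc] at hA
          rw [dist_comm]
          calc dist z (y (n+1+1)) ≤ r * dist z (y (n+1)) := hA
            _ = r * dist (y (n+1)) z := by rw [dist_comm]
            _ ≤ r * (r ^ n * a) := mul_le_mul_of_nonneg_left hhi hr0
            _ = r ^ (n+1) * a := by ring
        have hpre : θ * dist (y (n+1)) (F (y (n+1))) ≤ dist (y (n+1)) z := by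
          have hstep := eb (n+1)
          rw [hysucc2] at hstep
          nlinarith [mul_le_mul_of_nonneg_left hstep hθ0]
        have happly : dist (y (n+1+1)) (F z) ≤ r * dist (y (n+1)) z := by
          rw [show y (n+1+1) = F (y (n+1)) from hysucc (n+1)]
          exact hF (y (n+1)) z hpre
        have hlower : (1 - r) * a ≤ dist (y (n+1+1)) z := by
          have t1 : a = dist (F z) z := by rw [ha, dist_comm]
          have t2 : dist (F z) z ≤ dist (F z) (y (n+1+1)) + dist (y (n+1+1)) z :=
            dist_triangle _ _ _
          have t3 : dist (F z) (y (n+1+1)) = dist (y (n+1+1)) (F z) := dist_comm _ _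
          have t4 : dist (y (n+1+1)) (F z) ≤ r * (r ^ n * a) :=
            happly.trans (mul_le_mul_of_nonneg_left hhi hr0)
          have hpow : r ^ n ≤ 1 := pow_le_one₀ hr0 hr1.le
          nlinarith [mul_nonneg hr0 ha0.le]
        refine ⟨?_, hlower, hupper⟩
        have hpow : r ^ n ≤ 1 := pow_le_one₀ hr0 hr1.le
        have e1 : θ * (r ^ (n+1+1) * a) = (θ * r ^ 2) * (r ^ n * a) := by ring
        have e2 : (θ * r ^ 2) * (r ^ n * a) ≤ (1 - r) * (r ^ n * a) :=
          mul_le_mul_of_nonneg_right hθr2 (by positivity)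
        have e3 : (1 - r) * (r ^ n * a) ≤ (1 - r) * a := by
          nlinarith [mul_nonneg (mul_nonneg (show (0:ℝ) ≤ 1 - r by linarith) ha0.le)
            (show (0:ℝ) ≤ 1 - r ^ n by linarith)]
        linarith
    obtain ⟨n, hn⟩ := exists_pow_lt_of_lt_one (show (0:ℝ) < (1-r) by linarith) hr1
    obtain ⟨-, hlo, hhi⟩ := Q n
    nlinarith
  · -- big r branch
    by_cases hstop : ∃ n, F (x n) = x n
    · obtain ⟨n, hn⟩ := hstop
      exact ⟨x n, hn⟩
    · push_neg at hstop
      have hpos : ∀ n, 0 < dist (x n) (x (n+1)) := by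
        intro n
        rw [hxsucc, dist_comm]
        exact dist_pos.2 (hstop n)
      have alt : ∀ n, dist (x (n+1)) (F z) ≤ r * dist (x n) z ∨
          dist (x (n+2)) (F z) ≤ r * dist (x (n+1)) z := by
        intro n
        by_contra hcon
        push_neg at hcon
        obtain ⟨h1, h2⟩ := hcon
        have p1 : dist (x n) z < θ * dist (x n) (x (n+1)) := by
          by_contra hp
          push_neg at hp
          rw [hxsucc] at hp
          have := hF (x n) z hp
          rw [← hxsucc] at this
          exact absurd this (not_le.2 h1)
        have p2 : dist (x (n+1)) z < θ * dist (x (n+1)) (x (n+2)) := by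
          by_contra hp
          push_neg at hp
          rw [hxsucc2] at hp
          have := hF (x (n+1)) z hp
          rw [← hxsucc2] at this
          exact absurd this (not_le.2 h2)
        have pstep : dist (x (n+1)) (x (n+2)) ≤ r * dist (x n) (x (n+1)) := by
          rw [hxsucc2, hxsucc n]
          exact hF (x n) (F (x n))
            (by nlinarith [dist_nonneg (x := x n) (y := F (x n))])
        have ptri : dist (x n) (x (n+1)) ≤ dist (x n) z + dist (x (n+1)) z := by
          calc dist (x n) (x (n+1)) ≤ dist (x n) z + dist z (x (n+1)) := dist_triangle _ _ _
            _ = dist (x n) z + dist (x (n+1)) z := by rw [dist_comm z]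
        nlinarith [hpos n, mul_nonneg hθ0 (dist_nonneg (x := x n) (y := x (n+1)))]
      refine ⟨z, ?_⟩
      have hle : ∀ ε > (0:ℝ), dist z (F z) ≤ (1 + r) * ε := by
        intro ε hε
        obtain ⟨N, hN⟩ := Metric.tendsto_atTop.mp hz ε hε
        rcases alt N with h | h
        · have e1 : dist z (x (N+1)) ≤ ε := by
            rw [dist_comm]; exact (hN (N+1) (by omega)).le
          have e2 : dist (x (N+1)) (F z) ≤ r * ε :=
            h.trans (mul_le_mul_of_nonneg_left (hN N le_rfl).le hr0)
          calc dist z (F z) ≤ dist z (x (N+1)) + dist (x (N+1)) (F z) := dist_triangle _ _ _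
            _ ≤ ε + r * ε := by linarith
            _ = (1 + r) * ε := by ring
        · have e1 : dist z (x (N+2)) ≤ ε := by
            rw [dist_comm]; exact (hN (N+2) (by omega)).le
          have e2 : dist (x (N+2)) (F z) ≤ r * ε :=
            h.trans (mul_le_mul_of_nonneg_left (hN (N+1) (by omega)).le hr0)
          calc dist z (F z) ≤ dist z (x (N+2)) + dist (x (N+2)) (F z) := dist_triangle _ _ _
            _ ≤ ε + r * ε := by linarith
            _ = (1 + r) * ε := by ring
      have hfinal : dist z (F z) ≤ 0 := by
        by_contra hd
        push_neg at hd
        have hkey := hle (dist z (F z) / 4) (by positivity)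
        nlinarith [mul_lt_mul_of_pos_right hr1 (show (0:ℝ) < dist z (F z) / 4 by positivity)]
      exact (dist_le_zero.1 hfinal).symm

/-- If `X` is not complete then there is a fixed-point-free map satisfying the
Suzuki-type condition for any positive `r` and `θ`. -/
lemma suzuki_counterexample (h : ¬ CompleteSpace X) {r θ : ℝ} (hr : 0 < r) (hθ : 0 < θ) :
    ∃ F : X → X, (∀ x y, θ * dist x (F x) ≤ dist x y → dist (F x) (F y) ≤ r * dist x y) ∧
      ∀ x, F x ≠ x := by
  have hmain : ¬ ∀ u : ℕ → X, CauchySeq u → ∃ a, Tendsto u atTop (𝓝 a) :=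
    fun hu => h (Metric.complete_of_cauchySeq_tendsto hu)
  push_neg at hmain
  obtain ⟨u, hu, hnl⟩ := hmain
  have hcv : ∀ x : X, ∃ L, Tendsto (fun n => dist x (u n)) atTop (𝓝 L) := by
    intro x
    apply cauchySeq_tendsto_of_complete
    rw [Metric.cauchySeq_iff] at hu ⊢
    intro ε hε
    obtain ⟨N, hN⟩ := hu ε hε
    refine ⟨N, fun m hm n hn => ?_⟩
    have habs := abs_dist_sub_le (u m) (u n) x
    rw [Real.dist_eq, dist_comm x (u m), dist_comm x (u n)]
    exact lt_of_le_of_lt habs (hN m hm n hn)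
  choose f hf using hcv
  have fnonneg : ∀ x, 0 ≤ f x :=
    fun x => ge_of_tendsto (hf x) (Eventually.of_forall fun n => dist_nonneg)
  have fpos : ∀ x, 0 < f x := by
    intro x
    rcases (fnonneg x).lt_or_eq with h' | h'
    · exact h'
    · exfalso
      apply hnl x
      rw [tendsto_iff_dist_tendsto_zero]
      have : Tendsto (fun n => dist x (u n)) atTop (𝓝 0) := h' ▸ hf x
      simpa [dist_comm] using this
  have flip : ∀ x y : X, f x ≤ f y + dist x y := by
    intro x y
    apply le_of_tendsto_of_tendsto (hf x) ((hf y).add_const (dist x y))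
    exact Eventually.of_forall fun n => by
      calc dist x (u n) ≤ dist x y + dist y (u n) := dist_triangle _ _ _
        _ = dist y (u n) + dist x y := by ring
  have fsum : ∀ m k, dist (u m) (u k) ≤ f (u m) + f (u k) := by
    intro m k
    refine le_of_tendsto_of_tendsto (f := fun _ : ℕ => dist (u m) (u k))
      (g := fun n => dist (u m) (u n) + dist (u k) (u n)) tendsto_const_nhds
      ((hf (u m)).add (hf (u k))) (Eventually.of_forall fun n => ?_)
    exact by
      calc dist (u m) (u k) ≤ dist (u m) (u n) + dist (u n) (u k) := dist_triangle _ _ _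
        _ = dist (u m) (u n) + dist (u k) (u n) := by rw [dist_comm (u n)]
  have fsmall : ∀ ε > (0:ℝ), ∃ m, f (u m) ≤ ε := by
    intro ε hε
    obtain ⟨N, hN⟩ := Metric.cauchySeq_iff.1 hu ε hε
    refine ⟨N, le_of_tendsto (hf (u N)) ?_⟩
    exact eventually_atTop.2 ⟨N, fun n hn => (hN N le_rfl n hn).le⟩
  set α := min (1/2 : ℝ) (r * θ / (4 + θ)) with hα
  have hα0 : 0 < α := lt_min (by norm_num) (by positivity)
  have hαhalf : α ≤ 1/2 := min_le_left _ _
  have hαr : α * (4 + θ) ≤ r * θ := by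
    have h1 : α ≤ r * θ / (4 + θ) := min_le_right _ _
    have h2 : (0:ℝ) < 4 + θ := by linarith
    calc α * (4 + θ) ≤ (r * θ / (4 + θ)) * (4 + θ) := mul_le_mul_of_nonneg_right h1 h2.le
      _ = r * θ := div_mul_cancel₀ _ h2.ne'
  have hchoice : ∀ x : X, ∃ m, f (u m) ≤ α * f x :=
    fun x => fsmall _ (mul_pos hα0 (fpos x))
  choose g hg using hchoice
  refine ⟨fun x => u (g x), ?_, ?_⟩
  · intro x y hxy
    simp only at hxy ⊢
    have A : f (u (g x)) ≤ α * f x := hg x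
    have B : f (u (g y)) ≤ α * f y := hg y
    have l1 : dist (u (g x)) (u (g y)) ≤ f (u (g x)) + f (u (g y)) := fsum _ _
    have l2 : f y ≤ f x + dist x y := by
      have := flip y x
      rwa [dist_comm] at this
    have l3 : (1 - α) * f x ≤ dist x (u (g x)) := by
      have := flip x (u (g x))
      nlinarith
    have l4 : θ * ((1 - α) * f x) ≤ dist x y :=
      le_trans (mul_le_mul_of_nonneg_left l3 hθ.le) hxy
    have e2 : θ * f x ≤ 2 * dist x y := by
      nlinarith [mul_nonneg hθ.le (fpos x).le]
    have e1 : dist (u (g x)) (u (g y)) ≤ 2 * α * f x + α * dist x y := by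
      nlinarith [mul_le_mul_of_nonneg_left l2 hα0.le]
    have e3 : θ * dist (u (g x)) (u (g y)) ≤ θ * (r * dist x y) := by
      nlinarith [mul_le_mul_of_nonneg_left e1 hθ.le, mul_le_mul_of_nonneg_left e2 hα0.le,
        mul_le_mul_of_nonneg_right hαr (dist_nonneg (x := x) (y := y))]
    exact le_of_mul_le_mul_left e3 hθ
  · intro x hx
    have := hg x
    simp only at hx
    rw [hx] at this
    nlinarith [fpos x]
end FP

section Bridge
variable {X : Type*} [NormedAddCommGroup X] [NormedSpace ℝ X]

lemma trans_id1 (b : ℝ) (hb1 : b + 1 ≠ 0) (T : X → X) (x y : X) :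
    b • (x - y) + T x - T y =
      (b + 1) • ((b + 1)⁻¹ • (b • x + T x) - (b + 1)⁻¹ • (b • y + T y)) := by
  have key : ∀ v : X, (b + 1) • (b + 1)⁻¹ • v = v := fun v => by
    rw [smul_smul, mul_inv_cancel₀ hb1, one_smul]
  rw [smul_sub (b+1), key, key, smul_sub b]
  abel

lemma trans_id2 (b : ℝ) (hb1 : b + 1 ≠ 0) (T : X → X) (x : X) :
    x - T x = (b + 1) • (x - (b + 1)⁻¹ • (b • x + T x)) := by
  have key : ∀ v : X, (b + 1) • (b + 1)⁻¹ • v = v := fun v => by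
    rw [smul_smul, mul_inv_cancel₀ hb1, one_smul]
  rw [smul_sub (b+1), key, add_smul, one_smul]
  abel

lemma trans_fix (b : ℝ) (hb1 : b + 1 ≠ 0) (T : X → X) (x : X)
    (h : (b + 1)⁻¹ • (b • x + T x) = x) : T x = x := by
  have h2 : (b + 1) • ((b + 1)⁻¹ • (b • x + T x)) = (b + 1) • x := congrArg _ h
  rw [smul_smul, mul_inv_cancel₀ hb1, one_smul, add_smul, one_smul] at h2
  have := congrArg (fun v => v - b • x) h2
  simpa using this
end Bridge

lemma suzukiPsi_mul (b r : ℝ) (hb1 : b + 1 ≠ 0) :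
    suzukiPsi (1 / (b + 1)) r * (b + 1) = suzukiPsi 1 r := by
  have h5 : Real.sqrt 5 ^ 2 = 5 := Real.sq_sqrt (by norm_num)
  have h5n : 0 ≤ Real.sqrt 5 := Real.sqrt_nonneg 5
  have h5a : 2 ≤ Real.sqrt 5 := by nlinarith
  unfold suzukiPsi
  split_ifs with hA hB
  · field_simp
  · push_neg at hA
    have hr0 : 0 < r := by nlinarith
    have hr : r ≠ 0 := hr0.ne'
    field_simp
  · push_neg at hB
    have h2 : Real.sqrt 2 ^ 2 = 2 := Real.sq_sqrt (by norm_num)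
    have h2n : 0 ≤ Real.sqrt 2 := Real.sqrt_nonneg 2
    have h2a : 1 ≤ Real.sqrt 2 := by nlinarith
    have hr0 : 0 < r := by
      have : (0:ℝ) < 1 / Real.sqrt 2 := by positivity
      linarith
    have h1r : (1:ℝ) + r ≠ 0 := by linarith
    field_simp

lemma suzukiPsi_facts (r : ℝ) (hr0 : 0 ≤ r) (hr1 : r < 1) :
    0 < suzukiPsi 1 r ∧ suzukiPsi 1 r ≤ 1 ∧
      ((suzukiPsi 1 r * r ≤ 1 ∧ suzukiPsi 1 r * r ^ 2 ≤ 1 - r) ∨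
        suzukiPsi 1 r * (1 + r) ≤ 1) := by
  have h5 : Real.sqrt 5 ^ 2 = 5 := Real.sq_sqrt (by norm_num)
  have h5n : 0 ≤ Real.sqrt 5 := Real.sqrt_nonneg 5
  have h5a : 2 ≤ Real.sqrt 5 := by nlinarith
  have h2 : Real.sqrt 2 ^ 2 = 2 := Real.sq_sqrt (by norm_num)
  have h2n : 0 ≤ Real.sqrt 2 := Real.sqrt_nonneg 2
  have h2a : 1 ≤ Real.sqrt 2 := by nlinarith
  unfold suzukiPsi
  split_ifs with hA hB
  · refine ⟨one_pos, le_refl 1, Or.inl ⟨by nlinarith, by nlinarith⟩⟩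
  · push_neg at hA
    have hrhalf : 1/2 < r := by nlinarith
    have hr0' : 0 < r := by linarith
    have hsq : 1 - r ≤ r ^ 2 := by nlinarith
    have hpos : 0 < (1:ℝ) * (1 - r) / r ^ 2 := by
      apply div_pos (by nlinarith) (by positivity)
    refine ⟨hpos, ?_, Or.inl ⟨?_, ?_⟩⟩
    · rw [div_le_one (by positivity)]; nlinarith
    · rw [div_mul_eq_mul_div, div_le_one (by positivity)]; nlinarith
    · rw [div_mul_eq_mul_div, div_le_iff₀ (by positivity)]; nlinarith
  · push_neg at hB
    have h1r : (0:ℝ) < 1 + r := by linarith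
    refine ⟨by positivity, ?_, Or.inr ?_⟩
    · rw [div_le_one h1r]; linarith
    · rw [div_mul_eq_mul_div, div_le_one h1r]; linarith

theorem stmt_4 {X : Type*} [NormedAddCommGroup X] [NormedSpace ℝ X]
    (b : ℝ) (hb : 0 ≤ b) :
    List.TFAE
      [CompleteSpace X,
       ∀ r ∈ Set.Ico (0 : ℝ) 1,
         ∀ T ∈ GammaFamily X b r (suzukiPsi (1 / (b + 1)) r), ∃ p : X, T p = p,
       ∃ r ∈ Set.Ioo (0 : ℝ) 1, ∃ s ∈ Set.Ioc (0 : ℝ) (suzukiPsi (1 / (b + 1)) r),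
         ∀ T ∈ GammaFamily X b r s, ∃ p : X, T p = p] := by
  have hb1 : (0:ℝ) < b + 1 := by linarith
  have hb1' : (b:ℝ) + 1 ≠ 0 := hb1.ne'
  tfae_have 1 → 2 := by
    intro hc r hr T hT
    haveI : CompleteSpace X := hc
    haveI : Nonempty X := ⟨0⟩
    simp only [GammaFamily, Set.mem_setOf_eq] at hT
    set s := suzukiPsi (1 / (b + 1)) r with hs
    set θ := suzukiPsi 1 r with hθdef
    have hsθ : s * (b + 1) = θ := suzukiPsi_mul b r hb1'
    obtain ⟨hθ0, hθ1, hcase⟩ := suzukiPsi_facts r hr.1 hr.2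
    set F : X → X := fun x => (b + 1)⁻¹ • (b • x + T x) with hFdef
    have hFcond : ∀ x y : X, θ * dist x (F x) ≤ dist x y →
        dist (F x) (F y) ≤ r * dist x y := by
      intro x y hxy
      have hnorm1 : ‖x - T x‖ = (b + 1) * ‖x - F x‖ := by
        rw [show x - T x = (b+1) • (x - F x) from trans_id2 b hb1' T x,
          norm_smul, Real.norm_eq_abs, abs_of_pos hb1]
      have hpre : s * ‖x - T x‖ ≤ ‖x - y‖ := by
        rw [hnorm1, show s * ((b+1) * ‖x - F x‖) = θ * ‖x - F x‖ from by rw [← hsθ]; ring]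
        rw [dist_eq_norm, dist_eq_norm] at hxy
        exact hxy
      have hcon := hT x y hpre
      have hnorm2 : ‖b • (x - y) + T x - T y‖ = (b + 1) * ‖F x - F y‖ := by
        rw [show b • (x - y) + T x - T y = (b+1) • (F x - F y) from trans_id1 b hb1' T x y,
          norm_smul, Real.norm_eq_abs, abs_of_pos hb1]
      rw [hnorm2] at hcon
      rw [dist_eq_norm, dist_eq_norm]
      apply le_of_mul_le_mul_left _ hb1
      calc (b+1) * ‖F x - F y‖ ≤ r * (b + 1) * ‖x - y‖ := hcon
        _ = (b+1) * (r * ‖x - y‖) := by ring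
    obtain ⟨z, hzfix⟩ := suzuki_fp hr.1 hr.2 hθ0.le hθ1 hcase hFcond
    exact ⟨z, trans_fix b hb1' T z hzfix⟩
  tfae_have 2 → 3 := by
    intro h2
    have h5 : Real.sqrt 5 ^ 2 = 5 := Real.sq_sqrt (by norm_num)
    have h5n : 0 ≤ Real.sqrt 5 := Real.sqrt_nonneg 5
    have h5a : 2 ≤ Real.sqrt 5 := by nlinarith
    have hhalf : (1/2:ℝ) ≤ (Real.sqrt 5 - 1)/2 := by linarith
    have hpos : 0 < suzukiPsi (1/(b+1)) (1/2) := by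
      rw [suzukiPsi, if_pos hhalf]
      positivity
    exact ⟨1/2, by norm_num, suzukiPsi (1/(b+1)) (1/2), ⟨hpos, le_refl _⟩,
      h2 (1/2) ⟨by norm_num, by norm_num⟩⟩
  tfae_have 3 → 1 := by
    rintro ⟨r, hr, s, hs, hfp⟩
    by_contra hnc
    obtain ⟨F, hF, hnofix⟩ := suzuki_counterexample hnc hr.1 (mul_pos hs.1 hb1)
    set T : X → X := fun x => (b + 1) • F x - b • x with hTdef
    have hFeq : ∀ w : X, (b + 1)⁻¹ • (b • w + T w) = F w := by
      intro w
      show (b+1)⁻¹ • (b • w + ((b+1) • F w - b • w)) = F w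
      rw [show b • w + ((b+1) • F w - b • w) = (b+1) • F w from by abel, smul_smul,
        inv_mul_cancel₀ hb1', one_smul]
    have hmem : T ∈ GammaFamily X b r s := by
      intro x y hxy
      have hid2 := trans_id2 b hb1' T x
      rw [hFeq] at hid2
      have hid1 := trans_id1 b hb1' T x y
      rw [hFeq, hFeq] at hid1
      have hn1 : ‖x - T x‖ = (b+1) * ‖x - F x‖ := by
        rw [hid2, norm_smul, Real.norm_eq_abs, abs_of_pos hb1]
      have hpre : s * (b+1) * dist x (F x) ≤ dist x y := by
        rw [dist_eq_norm, dist_eq_norm]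
        calc s*(b+1)*‖x - F x‖ = s * ‖x - T x‖ := by rw [hn1]; ring
          _ ≤ ‖x - y‖ := hxy
      have hcon := hF x y hpre
      rw [dist_eq_norm, dist_eq_norm] at hcon
      rw [hid1, norm_smul, Real.norm_eq_abs, abs_of_pos hb1]
      calc (b+1) * ‖F x - F y‖ ≤ (b+1) * (r * ‖x - y‖) :=
            mul_le_mul_of_nonneg_left hcon hb1.le
        _ = r * (b+1) * ‖x - y‖ := by ring
    obtain ⟨p, hp⟩ := hfp T hmem
    apply hnofix p
    have hp' : (b+1) • F p - b • p = p := hp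
    have h2 : (b+1) • F p = (b+1) • p := by
      calc (b+1) • F p = ((b+1) • F p - b • p) + b • p := by abel
        _ = p + b • p := by rw [hp']
        _ = (b+1) • p := by rw [add_smul, one_smul]; abel
    have := congrArg (fun v => (b+1)⁻¹ • v) h2
    simpa [smul_smul, inv_mul_cancel₀ hb1'] using this
  tfae_finish
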